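/- Let X be a Polish space, let μ be a Borel probability measure on X, and let A denote the set of isolated points of X. Then there exists a meager set H ⊆ X with μ(H) = 1 if and only if μ(A) = 0. -/

import Mathlib

open MeasureTheory Set Filter Topology ENNReal NNReal

/-- Let `X` be a Polish space, `μ` a Borel probability measure on `X`, and
`A` the set of isolated points of `X` (points whose singleton is open).  Then there is a
meager set `H ⊆ X` with `μ(H) = 1` (the complement of `H` is `μ`-null) if and only if
`μ(A) = 0` (the set `A` is `μ`-null). -/
theorem stmt_15
    {X : Type} [TopologicalSpace X] [PolishSpace X] [MeasurableSpace X] [BorelSpace X]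
    (μ : ProbabilityMeasure X) :
    (∃ H : Set X, IsMeagre H ∧ (μ : Measure X) Hᶜ = 0) ↔
      (μ : Measure X) {x : X | IsOpen ({x} : Set X)} = 0 := by
  letI := TopologicalSpace.upgradeIsCompletelyMetrizable X
  constructor
  · rintro ⟨H, hH, hHc⟩
    have hsub : {x : X | IsOpen ({x} : Set X)} ⊆ Hᶜ := by
      intro x hx
      by_contra hxH
      simp only [Set.mem_compl_iff, not_not] at hxH
      have h1 : IsMeagre ({x} : Set X) := hH.mono (Set.singleton_subset_iff.mpr hxH)
      have h2 : Dense ({x}ᶜ : Set X) := dense_of_mem_residual h1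
      obtain ⟨y, hy1, hy2⟩ := h2.inter_open_nonempty {x} hx ⟨x, rfl⟩
      exact hy2 hy1
    exact measure_mono_null hsub hHc
  · intro hA
    have hX : Nonempty X := by
      by_contra h
      rw [not_nonempty_iff] at h
      have h1 : (μ : Measure X) Set.univ = 1 := measure_univ
      rw [Set.univ_eq_empty_iff.mpr h, measure_empty] at h1
      exact zero_ne_one h1
    obtain ⟨f, hf⟩ := TopologicalSpace.exists_dense_seq X
    set A := {x : X | IsOpen ({x} : Set X)} with hAdef
    set T := {x : X | x ∉ A ∧ (μ : Measure X) {x} ≠ 0} with hTdef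
    set ν := (μ : Measure X).restrict (A ∪ T)ᶜ with hνdef
    have hνsing : ∀ x : X, ν {x} = 0 := by
      intro x
      rw [hνdef, Measure.restrict_apply (measurableSet_singleton x)]
      by_cases hx : x ∈ A ∪ T
      · have : ({x} : Set X) ∩ (A ∪ T)ᶜ = ∅ := by
          ext y; simp only [Set.mem_inter_iff, Set.mem_singleton_iff, Set.mem_compl_iff,
            Set.mem_empty_iff_false, iff_false, not_and]
          rintro rfl; exact fun h => h hx
        rw [this, measure_empty]
      · refine measure_mono_null Set.inter_subset_left ?_
        rw [Set.mem_union, not_or] at hx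
        by_contra h
        exact hx.2 ⟨hx.1, h⟩
    -- construct dense open sets of small ν-measure
    have key : ∀ n : ℕ, ∃ U : Set X, IsOpen U ∧ Dense U ∧ ν U ≤ ((n : ℝ≥0∞))⁻¹ := by
      intro n
      rcases Nat.eq_zero_or_pos n with rfl | hn
      · exact ⟨Set.univ, isOpen_univ, dense_univ, by simp⟩
      have hε : ((n : ℝ≥0∞))⁻¹ ≠ 0 := by
        simp [ENNReal.inv_ne_zero]
      obtain ⟨δ, hδpos, hδsum⟩ := ENNReal.exists_pos_sum_of_countable' hε ℕ
      have hch : ∀ k : ℕ, ∃ V : Set X, ({f k} : Set X) ⊆ V ∧ IsOpen V ∧ ν V < δ k := by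
        intro k
        exact Set.exists_isOpen_lt_of_lt {f k} (δ k)
          (by rw [hνsing (f k)]; exact hδpos k)
      choose V hV1 hV2 hV3 using hch
      refine ⟨⋃ k, V k, isOpen_iUnion hV2, ?_, ?_⟩
      · exact hf.mono (Set.range_subset_iff.mpr fun k =>
          Set.mem_iUnion.mpr ⟨k, hV1 k rfl⟩)
      · calc ν (⋃ k, V k) ≤ ∑' k, ν (V k) := measure_iUnion_le V
          _ ≤ ∑' k, δ k := ENNReal.tsum_le_tsum fun k => (hV3 k).le
          _ ≤ ((n : ℝ≥0∞))⁻¹ := hδsum.le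
    choose U hUo hUd hUm using key
    set G := ⋂ n, U n with hGdef
    have hGmeas : MeasurableSet G := MeasurableSet.iInter fun n => (hUo n).measurableSet
    have hνG : ν G = 0 := by
      have hle : ∀ n : ℕ, ν G ≤ ((n : ℝ≥0∞))⁻¹ :=
        fun n => le_trans (measure_mono (Set.iInter_subset U n)) (hUm n)
      have := ge_of_tendsto' ENNReal.tendsto_inv_nat_nhds_zero hle
      exact le_antisymm this zero_le
    -- T is countable and meager
    have hTc : T.Countable := by
      have := Measure.countable_meas_level_set_pos (μ := (μ : Measure X))
        (g := id) measurable_id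
      apply this.mono
      rintro x ⟨-, hx⟩
      simpa [pos_iff_ne_zero] using hx
    have hTm : IsMeagre T := by
      rw [IsMeagre]
      have hTeq : Tᶜ = ⋂ x ∈ T, ({x}ᶜ : Set X) := by
        rw [← Set.compl_iUnion₂]
        congr 1
        exact (Set.biUnion_of_singleton T).symm
      rw [hTeq]
      refine (countable_bInter_mem hTc).mpr fun x hx => residual_of_dense_open
        isClosed_singleton.isOpen_compl ?_
      rw [dense_compl_singleton_iff_not_open]
      exact hx.1
    have hGcm : IsMeagre Gᶜ := by
      rw [IsMeagre, compl_compl]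
      exact countable_iInter_mem.mpr fun n => residual_of_dense_open (hUo n) (hUd n)
    have hunion : IsMeagre (Gᶜ ∪ T) := by
      rw [IsMeagre, Set.compl_union]
      exact Filter.inter_mem hGcm hTm
    refine ⟨Gᶜ ∪ T, hunion, ?_⟩
    have hcompl : (Gᶜ ∪ T)ᶜ = G ∩ Tᶜ := by rw [Set.compl_union, compl_compl]
    rw [hcompl]
    have h1 : (μ : Measure X) ((G ∩ Tᶜ) ∩ (A ∪ T)) = 0 := by
      refine measure_mono_null ?_ hA
      rintro x ⟨⟨-, hxT⟩, hxAT⟩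
      rcases hxAT with h | h
      · exact h
      · exact absurd h hxT
    have h2 : (μ : Measure X) ((G ∩ Tᶜ) \ (A ∪ T)) = 0 := by
      refine measure_mono_null (t := G ∩ (A ∪ T)ᶜ) ?_ ?_
      · rintro x ⟨⟨hxG, -⟩, hxAT⟩; exact ⟨hxG, hxAT⟩
      · rw [← Measure.restrict_apply hGmeas, ← hνdef]
        exact hνG
    have := measure_le_inter_add_diff (μ : Measure X) (G ∩ Tᶜ) (A ∪ T)
    rw [h1, h2, add_zero] at this
    exact le_antisymm this zero_le
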